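/- Let E = EuclideanSpace ℝ (Fin n), let H : E → E be a self-adjoint continuous linear map, let c ∈ E, and let 0 < μ ≤ L be real numbers such that μ‖v‖² ≤ ⟪v, H v⟫ ≤ L‖v‖² for all v ∈ E. Define J(u) := ½⟪u, H u⟫ + ⟪c, u⟫, so that ∇J(u) = H u + c. Let U ⊆ E be a nonempty closed convex set and let u⋆ ∈ U be a minimizer of J over U. Then for every u ∈ E, the projected gradient iterate u⁺ := Proj_U(u − (1/L)(H u + c)) satisfies ‖u⁺ − u⋆‖ ≤ (1 − μ/L)‖u − u⋆‖, where Proj_U denotes the metric projection onto U. -/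

import Mathlib

open scoped RealInnerProductSpace

/-- Cauchy–Schwarz for a positive semidefinite self-adjoint operator. -/
lemma semidef_cs {E : Type*} [NormedAddCommGroup E] [InnerProductSpace ℝ E]
    (B : E →L[ℝ] E) (hsym : ∀ x y : E, ⟪B x, y⟫ = ⟪x, B y⟫)
    (hpos : ∀ v : E, 0 ≤ ⟪v, B v⟫) (x y : E) :
    ⟪x, B y⟫ ^ 2 ≤ ⟪x, B x⟫ * ⟪y, B y⟫ := by
  have h : ∀ t : ℝ, 0 ≤ ⟪y, B y⟫ * (t * t) + (2 * ⟪x, B y⟫) * t + ⟪x, B x⟫ := by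
    intro t
    have h0 := hpos (x + t • y)
    have h1 : ⟪y, B x⟫ = ⟪x, B y⟫ := by rw [← hsym x y, real_inner_comm]
    have e : ⟪x + t • y, B (x + t • y)⟫
        = ⟪y, B y⟫ * (t * t) + (2 * ⟪x, B y⟫) * t + ⟪x, B x⟫ := by
      rw [map_add, map_smul, inner_add_left, inner_add_right, inner_add_right,
        real_inner_smul_left, real_inner_smul_left, real_inner_smul_right,
        real_inner_smul_right, h1]
      ring
    linarith [e ▸ h0]
  have hd := discrim_le_zero h
  rw [discrim] at hd
  nlinarith [hd]

lemma norm_bound {E : Type*} [NormedAddCommGroup E] [InnerProductSpace ℝ E]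
    (B : E →L[ℝ] E) (hsym : ∀ x y : E, ⟪B x, y⟫ = ⟪x, B y⟫)
    (κ : ℝ) (hκ : 0 ≤ κ)
    (hpos : ∀ v : E, 0 ≤ ⟪v, B v⟫) (hub : ∀ v : E, ⟪v, B v⟫ ≤ κ * ‖v‖ ^ 2)
    (v : E) : ‖B v‖ ≤ κ * ‖v‖ := by
  by_cases h0 : B v = 0
  · simp [h0]; positivity
  · have hcs := semidef_cs B hsym hpos v (B v)
    have e1 : ⟪v, B (B v)⟫ = ‖B v‖ ^ 2 := by
      rw [← hsym v (B v), real_inner_self_eq_norm_sq]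
    rw [e1] at hcs
    have h1 := hub v
    have h2 := hub (B v)
    have h3 := hpos v
    have h4 := hpos (B v)
    have hnz : (0:ℝ) < ‖B v‖ ^ 2 := by
      have : (0:ℝ) < ‖B v‖ := norm_pos_iff.2 h0
      positivity
    have key : ‖B v‖ ^ 2 * ‖B v‖ ^ 2 ≤ (κ * ‖v‖ ^ 2) * (κ * ‖B v‖ ^ 2) := by
      calc ‖B v‖ ^ 2 * ‖B v‖ ^ 2 = (‖B v‖ ^ 2) ^ 2 := by ring
        _ ≤ ⟪v, B v⟫ * ⟪B v, B (B v)⟫ := hcs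
        _ ≤ (κ * ‖v‖ ^ 2) * (κ * ‖B v‖ ^ 2) :=
            mul_le_mul h1 h2 h4 (by positivity)
    have hsq : ‖B v‖ ^ 2 ≤ (κ * ‖v‖) ^ 2 := by
      have := (mul_le_mul_iff_left₀ hnz).1 (by nlinarith [key] : ‖B v‖ ^ 2 * ‖B v‖ ^ 2 ≤ ((κ * ‖v‖) ^ 2) * ‖B v‖ ^ 2)
      exact this
    have := Real.sqrt_le_sqrt hsq
    rwa [Real.sqrt_sq (norm_nonneg _), Real.sqrt_sq (by positivity)] at this

set_option maxHeartbeats 1000000 in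
/-- Linear convergence rate `κ = 1 − μ/L` of the projected gradient descent
method with step size `1/L` on a `μ`-strongly convex, `L`-smooth quadratic objective.
The projected gradient iterate `u⁺ = Proj_U(u − (1/L)(Hu + c))` is characterized as the
(unique) nearest point of `U` to `u − (1/L)(Hu + c)`. -/
theorem pgdm_linear_convergence
    {n : ℕ} (H : EuclideanSpace ℝ (Fin n) →L[ℝ] EuclideanSpace ℝ (Fin n))
    (hH : IsSelfAdjoint H) (c : EuclideanSpace ℝ (Fin n)) (μ L : ℝ)
    (hμ : 0 < μ) (hμL : μ ≤ L)
    (hbound : ∀ v : EuclideanSpace ℝ (Fin n),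
      μ * ‖v‖ ^ 2 ≤ ⟪v, H v⟫ ∧ ⟪v, H v⟫ ≤ L * ‖v‖ ^ 2)
    (J : EuclideanSpace ℝ (Fin n) → ℝ)
    (hJ : ∀ u, J u = (1 / 2) * ⟪u, H u⟫ + ⟪c, u⟫)
    (U : Set (EuclideanSpace ℝ (Fin n))) (hUne : U.Nonempty) (hUcl : IsClosed U)
    (hUconv : Convex ℝ U)
    (ustar : EuclideanSpace ℝ (Fin n)) (hustarU : ustar ∈ U)
    (hmin : ∀ u ∈ U, J ustar ≤ J u) :
    ∀ u : EuclideanSpace ℝ (Fin n), ∀ up ∈ U,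
      (∀ w ∈ U, ‖u - (1 / L) • (H u + c) - up‖ ≤ ‖u - (1 / L) • (H u + c) - w‖) →
      ‖up - ustar‖ ≤ (1 - μ / L) * ‖u - ustar‖ := by
  intro u up hupU hnear
  have hL : (0:ℝ) < L := lt_of_lt_of_le hμ hμL
  have hsym : ∀ x y : EuclideanSpace ℝ (Fin n), ⟪H x, y⟫ = ⟪x, H y⟫ := fun x y =>
    ((ContinuousLinearMap.isSelfAdjoint_iff_isSymmetric).1 hH) x y
  -- variational inequality at the minimizer
  have hVI : ∀ w ∈ U, 0 ≤ ⟪H ustar + c, w - ustar⟫ := by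
    intro w hw
    by_contra hcon
    push_neg at hcon
    set d := w - ustar with hd
    set g := ⟪H ustar + c, d⟫ with hg
    set q := ⟪d, H d⟫ with hq
    have hq0 : 0 ≤ q := le_trans (by positivity) (hbound d).1
    set t : ℝ := min 1 (-g / (q + 1)) with ht
    have ht0 : 0 < t := lt_min one_pos (div_pos (by linarith) (by linarith))
    have ht1 : t ≤ 1 := min_le_left _ _
    have htq : t ≤ -g / (q + 1) := min_le_right _ _
    have hmem : ustar + t • d ∈ U := by
      have h := hUconv hustarU hw (by linarith : (0:ℝ) ≤ 1 - t) ht0.le (by ring)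
      have e : ustar + t • d = (1 - t) • ustar + t • w := by rw [hd]; module
      rw [e]; exact h
    have hJle := hmin _ hmem
    rw [hJ, hJ] at hJle
    have h1 : ⟪ustar, H d⟫ = ⟪d, H ustar⟫ := by rw [← hsym d ustar, real_inner_comm]
    have expand : ⟪ustar + t • d, H (ustar + t • d)⟫
        = ⟪ustar, H ustar⟫ + 2 * t * ⟪d, H ustar⟫ + t ^ 2 * q := by
      rw [map_add, map_smul, inner_add_left, inner_add_right, inner_add_right,
        real_inner_smul_left, real_inner_smul_left, real_inner_smul_right,
        real_inner_smul_right, h1, hq]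
      ring
    have expand2 : ⟪c, ustar + t • d⟫ = ⟪c, ustar⟫ + t * ⟪c, d⟫ := by
      rw [inner_add_right, real_inner_smul_right]
    have hgsplit : g = ⟪d, H ustar⟫ + ⟪c, d⟫ := by
      rw [hg, inner_add_left, real_inner_comm (H ustar) d]
    rw [expand, expand2] at hJle
    have key2 : 0 ≤ t * (2 * g + t * q) := by nlinarith [hJle, hgsplit]
    have h10 : 0 ≤ 2 * g + t * q := by
      have := (mul_le_mul_iff_right₀ ht0).1 (by linarith [key2] : t * 0 ≤ t * (2 * g + t * q))
      linarith
    have hqq : t * q ≤ -g * (q / (q + 1)) := by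
      have h5 : t * q ≤ (-g / (q + 1)) * q := by nlinarith
      calc t * q ≤ (-g / (q + 1)) * q := h5
        _ = -g * (q / (q + 1)) := by ring
    have hfrac : q / (q + 1) < 1 := by
      rw [div_lt_one (by linarith)]; linarith
    have hgpos : (0:ℝ) < -g := by linarith
    have h11 : -g * (q / (q + 1)) < -g * 1 := mul_lt_mul_of_pos_left hfrac hgpos
    linarith
  -- variational inequality for the projection
  have hVIp : ⟪(u - (1 / L) • (H u + c)) - up, ustar - up⟫ ≤ 0 := by
    by_contra hcon
    push_neg at hcon
    set z := u - (1 / L) • (H u + c) with hz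
    set d := ustar - up with hd
    set s := ⟪z - up, d⟫ with hs
    set t : ℝ := min 1 (s / (‖d‖ ^ 2 + 1)) with ht
    have hcon' : 0 < s := hcon
    have ht0 : 0 < t := lt_min one_pos (div_pos hcon' (by positivity))
    have ht1 : t ≤ 1 := min_le_left _ _
    have htd : t ≤ s / (‖d‖ ^ 2 + 1) := min_le_right _ _
    have hmem : up + t • d ∈ U := by
      have h := hUconv hupU hustarU (by linarith : (0:ℝ) ≤ 1 - t) ht0.le (by ring)
      have e : up + t • d = (1 - t) • up + t • ustar := by rw [hd]; module
      rw [e]; exact h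
    have h1 := hnear _ hmem
    have h2 : ‖z - up‖ ^ 2 ≤ ‖z - (up + t • d)‖ ^ 2 := by
      have h3 := norm_nonneg (z - up)
      nlinarith [h1]
    have e : ‖z - (up + t • d)‖ ^ 2 = ‖z - up‖ ^ 2 - 2 * t * s + t ^ 2 * ‖d‖ ^ 2 := by
      have e2 : z - (up + t • d) = (z - up) - t • d := by abel
      rw [e2, norm_sub_sq_real, real_inner_smul_right, norm_smul, ← hs]
      simp only [Real.norm_eq_abs, abs_of_pos ht0, mul_pow]
      ring
    rw [e] at h2
    have key : 2 * t * s ≤ t ^ 2 * ‖d‖ ^ 2 := by linarith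
    have h6 : t * ‖d‖ ^ 2 ≤ s * (‖d‖ ^ 2 / (‖d‖ ^ 2 + 1)) := by
      have h3 : t * ‖d‖ ^ 2 ≤ (s / (‖d‖ ^ 2 + 1)) * ‖d‖ ^ 2 := by nlinarith [sq_nonneg ‖d‖]
      calc t * ‖d‖ ^ 2 ≤ (s / (‖d‖ ^ 2 + 1)) * ‖d‖ ^ 2 := h3
        _ = s * (‖d‖ ^ 2 / (‖d‖ ^ 2 + 1)) := by ring
    have hfrac : ‖d‖ ^ 2 / (‖d‖ ^ 2 + 1) < 1 := by
      rw [div_lt_one (by positivity)]; linarith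
    have h10 : 2 * s ≤ t * ‖d‖ ^ 2 := by
      have := (mul_le_mul_iff_right₀ ht0).1 (by nlinarith [key] : t * (2 * s) ≤ t * (t * ‖d‖ ^ 2))
      linarith
    have h11 : s * (‖d‖ ^ 2 / (‖d‖ ^ 2 + 1)) < s * 1 := mul_lt_mul_of_pos_left hfrac hcon'
    linarith
  -- combine
  set z := u - (1 / L) • (H u + c) with hz
  set zs := ustar - (1 / L) • (H ustar + c) with hzs
  have hVIs : ⟪zs - ustar, up - ustar⟫ ≤ 0 := by
    have h := hVI up hupU
    have e : zs - ustar = -((1 / L) • (H ustar + c)) := by rw [hzs]; abel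
    rw [e, inner_neg_left, real_inner_smul_left]
    have h7 : (0:ℝ) ≤ 1 / L := by positivity
    nlinarith [h]
  have hcontract : ‖up - ustar‖ ^ 2 ≤ ⟪z - zs, up - ustar⟫ := by
    have h1 : ⟪z - up, ustar - up⟫ ≤ 0 := hVIp
    have e1 : ⟪z - up, ustar - up⟫ = -⟪z - up, up - ustar⟫ := by
      rw [← inner_neg_right]; congr 1; abel
    have e2 : ⟪z - zs, up - ustar⟫
        = ⟪z - up, up - ustar⟫ - ⟪zs - ustar, up - ustar⟫ + ⟪up - ustar, up - ustar⟫ := by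
      rw [← inner_sub_left, ← inner_add_left]; congr 1; abel
    rw [e2, ← real_inner_self_eq_norm_sq]
    linarith [e1 ▸ h1]
  have hnormle : ‖up - ustar‖ ≤ ‖z - zs‖ := by
    by_cases h0 : up - ustar = 0
    · simp [h0]
    · have hcs := real_inner_le_norm (z - zs) (up - ustar)
      have hpos : 0 < ‖up - ustar‖ := norm_pos_iff.2 h0
      nlinarith [hcontract, hcs, hpos]
  -- the contraction operator
  set B : EuclideanSpace ℝ (Fin n) →L[ℝ] EuclideanSpace ℝ (Fin n) :=
    ContinuousLinearMap.id ℝ _ - (1 / L) • H with hB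
  have hBapply : ∀ v, B v = v - (1 / L) • H v := by
    intro v; simp [hB]
  have hBsym : ∀ x y, ⟪B x, y⟫ = ⟪x, B y⟫ := by
    intro x y
    rw [hBapply, hBapply, inner_sub_left, inner_sub_right,
      real_inner_smul_left, real_inner_smul_right, hsym]
  have hBpos : ∀ v, 0 ≤ ⟪v, B v⟫ := by
    intro v
    rw [hBapply, inner_sub_right, real_inner_smul_right, real_inner_self_eq_norm_sq]
    have h8 : (1 / L) * ⟪v, H v⟫ ≤ (1 / L) * (L * ‖v‖ ^ 2) := by
      have := (hbound v).2
      have h1L : (0:ℝ) ≤ 1 / L := by positivity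
      nlinarith
    have e : (1 / L) * (L * ‖v‖ ^ 2) = ‖v‖ ^ 2 := by field_simp
    linarith [e ▸ h8]
  have hBub : ∀ v, ⟪v, B v⟫ ≤ (1 - μ / L) * ‖v‖ ^ 2 := by
    intro v
    rw [hBapply, inner_sub_right, real_inner_smul_right, real_inner_self_eq_norm_sq]
    have h9 : (1 / L) * (μ * ‖v‖ ^ 2) ≤ (1 / L) * ⟪v, H v⟫ := by
      have := (hbound v).1
      have h1L : (0:ℝ) ≤ 1 / L := by positivity
      nlinarith
    have e : (1 - μ / L) * ‖v‖ ^ 2 = ‖v‖ ^ 2 - (1 / L) * (μ * ‖v‖ ^ 2) := by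
      field_simp
    linarith [e ▸ le_refl ((1 - μ / L) * ‖v‖ ^ 2)]
  have hκ : (0:ℝ) ≤ 1 - μ / L := by
    have : μ / L ≤ 1 := by rw [div_le_one hL]; exact hμL
    linarith
  have hzzs : z - zs = B (u - ustar) := by
    rw [hBapply, hz, hzs, map_sub, smul_sub, smul_add, smul_add]
    abel
  calc ‖up - ustar‖ ≤ ‖z - zs‖ := hnormle
    _ = ‖B (u - ustar)‖ := by rw [hzzs]
    _ ≤ (1 - μ / L) * ‖u - ustar‖ := norm_bound B hBsym _ hκ hBpos hBub _
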